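/- Let 𝓜 be the set of generalised matching functions (f(x) = 0 unless the Hamming weight of x is at most 1). For f ∈ 𝓜 of arity k and g ∈ 𝓜 of arity ℓ, the function h(x₁,…,x_{k+ℓ−2}) := Σ_{y₁,y₂∈{0,1}} f(y₁,x₁,…,x_{k−1})·g(x_k,…,x_{k+ℓ−2},y₂)·NEQ(y₁,y₂) is either a constant (when k = ℓ = 1) or again in 𝓜. -/

import Mathlib

/-- `f` is a generalised matching function: it vanishes on inputs of
Hamming weight greater than 1. -/
def InM {n : ℕ} (f : (Fin n → Bool) → ℂ) : Prop :=
  ∀ x : Fin n → Bool, 1 < (Finset.univ.filter (fun i => x i = true)).card → f x = 0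

/-- The binary disequality function. -/
def NEQ (y₁ y₂ : Bool) : ℂ := if y₁ = y₂ then 0 else 1

def W {k : ℕ} (v : Fin k → Bool) : ℕ := (Finset.univ.filter (fun i => v i = true)).card

lemma W_eq {k : ℕ} (v : Fin k → Bool) : W v = ∑ i : Fin k, (if v i = true then 1 else 0) := by
  unfold W; rw [Finset.card_filter]

lemma W_cons {k : ℕ} (b : Bool) (v : Fin k → Bool) :
    W (Fin.cons b v) = (if b then 1 else 0) + W v := by
  rw [W_eq, W_eq, Fin.sum_univ_succ]; simp

lemma W_snoc {k : ℕ} (v : Fin k → Bool) (b : Bool) :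
    W (Fin.snoc v b) = W v + (if b then 1 else 0) := by
  rw [W_eq, W_eq, Fin.sum_univ_castSucc]; simp [add_comm]

lemma W_add {a b : ℕ} (x : Fin (a + b) → Bool) :
    W x = W (fun i => x (Fin.castAdd b i)) + W (fun j => x (Fin.natAdd a j)) := by
  rw [W_eq, W_eq, W_eq, Fin.sum_univ_add]

/-- For `f ∈ 𝓜` of arity `k = m+1` and `g ∈ 𝓜` of arity `ℓ = n+1`, the function
`h(x₁,…,x_{k+ℓ−2}) = Σ_{y₁,y₂} f(y₁,x₁,…,x_{k−1})·g(x_k,…,x_{k+ℓ−2},y₂)·NEQ(y₁,y₂)`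
is a constant (when `k = ℓ = 1`) or again in `𝓜`. -/
theorem InM_contract (m n : ℕ) (f : (Fin (m + 1) → Bool) → ℂ)
    (g : (Fin (n + 1) → Bool) → ℂ) (hf : InM f) (hg : InM g) :
    (m = 0 ∧ n = 0) ∨
      InM (fun x : Fin (m + n) → Bool => ∑ y₁ : Bool, ∑ y₂ : Bool,
        f (Fin.cons y₁ (fun i => x (Fin.castAdd n i))) *
        g (Fin.snoc (fun j => x (Fin.natAdd m j)) y₂) * NEQ y₁ y₂) := by
  right
  intro x hx
  set xl : Fin m → Bool := fun i => x (Fin.castAdd n i) with hxl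
  set xr : Fin n → Bool := fun j => x (Fin.natAdd m j) with hxr
  have htot : 1 < W xl + W xr := by rw [← W_add]; exact hx
  have h1 : f (Fin.cons false xl) * g (Fin.snoc xr true) = 0 := by
    by_cases h : 1 < W xl
    · have : 1 < W (Fin.cons false xl) := by rw [W_cons]; simpa using h
      rw [hf _ this, zero_mul]
    · have : 1 < W (Fin.snoc xr true) := by rw [W_snoc]; simp; omega
      rw [hg _ this, mul_zero]
  have h2 : f (Fin.cons true xl) * g (Fin.snoc xr false) = 0 := by
    by_cases h : 1 ≤ W xl
    · have : 1 < W (Fin.cons true xl) := by rw [W_cons]; simp; omega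
      rw [hf _ this, zero_mul]
    · have : 1 < W (Fin.snoc xr false) := by rw [W_snoc]; simp; omega
      rw [hg _ this, mul_zero]
  simp only [Fintype.sum_bool, NEQ]
  simp [h1, h2]
  exact (by rw [h2, h1, add_zero] : f (Fin.cons true xl) * g (Fin.snoc xr false) + f (Fin.cons false xl) * g (Fin.snoc xr true) = 0)
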